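/- (First Korn inequality.) For every smooth compactly supported vector field v = (v₁,v₂) ∈ C_c^∞(ℝ², ℝ²), 2 ∫_{ℝ²} |ε(v)(x)|² dx ≥ ∫_{ℝ²} |∇v(x)|² dx. -/

import Mathlib

open MeasureTheory

/-- First partial derivative `∂₁ f` of `f : ℝ² → ℝ`. -/
noncomputable def pd1 (f : ℝ × ℝ → ℝ) : ℝ × ℝ → ℝ := fun x => fderiv ℝ f x (1, 0)

/-- Second partial derivative `∂₂ f` of `f : ℝ² → ℝ`. -/
noncomputable def pd2 (f : ℝ × ℝ → ℝ) : ℝ × ℝ → ℝ := fun x => fderiv ℝ f x (0, 1)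

/-- Squared Frobenius norm of the symmetric gradient (linearized strain):
`|ε(v)|² = |∂₁v₁|² + |∂₂v₂|² + (1/2)|∂₂v₁ + ∂₁v₂|²`. -/
noncomputable def epsSq (v1 v2 : ℝ × ℝ → ℝ) (x : ℝ × ℝ) : ℝ :=
  (pd1 v1 x) ^ 2 + (pd2 v2 x) ^ 2 + (1 / 2) * (pd2 v1 x + pd1 v2 x) ^ 2

/-- Squared gradient norm `|∇v|² = Σ_{i,j} |∂_j v_i|²`. -/
noncomputable def gradSq (v1 v2 : ℝ × ℝ → ℝ) (x : ℝ × ℝ) : ℝ :=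
  (pd1 v1 x) ^ 2 + (pd2 v1 x) ^ 2 + (pd1 v2 x) ^ 2 + (pd2 v2 x) ^ 2

lemma topsucc : ((⊤:ℕ∞) : WithTop ℕ∞) + 1 ≤ ((⊤:ℕ∞) : WithTop ℕ∞) := by
  exact_mod_cast le_top

lemma pdSmooth (f : ℝ × ℝ → ℝ) (hf : ContDiff ℝ (⊤ : ℕ∞) f) (v : ℝ × ℝ) :
    ContDiff ℝ (⊤ : ℕ∞) (fun x => fderiv ℝ f x v) :=
  (hf.fderiv_right topsucc).clm_apply contDiff_const

lemma pdCompact (f : ℝ × ℝ → ℝ) (hcf : HasCompactSupport f) (v : ℝ × ℝ) :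
    HasCompactSupport (fun x => fderiv ℝ f x v) :=
  hcf.fderiv_apply ℝ v

lemma mulInt (f g : ℝ × ℝ → ℝ) (hf : Continuous f) (hg : Continuous g)
    (hcf : HasCompactSupport f) :
    Integrable (fun x => f x * g x) (volume : Measure (ℝ × ℝ)) :=
  (hf.mul hg).integrable_of_hasCompactSupport (hcf.mul_right)

lemma sndSymm (f : ℝ × ℝ → ℝ) (hf : ContDiff ℝ (⊤ : ℕ∞) f) (v w x : ℝ × ℝ) :
    fderiv ℝ (fun y => fderiv ℝ f y v) x w = fderiv ℝ (fun y => fderiv ℝ f y w) x v := by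
  have hd : DifferentiableAt ℝ (fderiv ℝ f) x :=
    ((hf.fderiv_right topsucc).differentiable (by simp)).differentiableAt
  rw [fderiv_clm_apply hd (differentiableAt_const v),
      fderiv_clm_apply hd (differentiableAt_const w)]
  simp only [fderiv_fun_const, Pi.zero_apply, ContinuousLinearMap.comp_zero, zero_add,
    ContinuousLinearMap.add_apply, ContinuousLinearMap.flip_apply]
  exact (hf.contDiffAt.isSymmSndFDerivAt (by rw [minSmoothness_of_isRCLikeNormedField]; exact WithTop.coe_le_coe.mpr (le_top : (2:ℕ∞) ≤ ⊤))).eq w v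

lemma swapInt (f g : ℝ × ℝ → ℝ) (hf : ContDiff ℝ (⊤ : ℕ∞) f) (hg : ContDiff ℝ (⊤ : ℕ∞) g)
    (hcf : HasCompactSupport f) (hcg : HasCompactSupport g) (v w : ℝ × ℝ) :
    ∫ x : ℝ × ℝ, fderiv ℝ f x v * fderiv ℝ g x w
      = ∫ x : ℝ × ℝ, fderiv ℝ f x w * fderiv ℝ g x v := by
  have hone : ((⊤:ℕ∞) : WithTop ℕ∞) ≠ 0 := by simp
  have hFv : ContDiff ℝ (⊤ : ℕ∞) (fun x => fderiv ℝ f x v) := pdSmooth f hf v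
  have hFw : ContDiff ℝ (⊤ : ℕ∞) (fun x => fderiv ℝ f x w) := pdSmooth f hf w
  have cFv : HasCompactSupport (fun x => fderiv ℝ f x v) := pdCompact f hcf v
  have cFw : HasCompactSupport (fun x => fderiv ℝ f x w) := pdCompact f hcf w
  have key1 : ∫ x : ℝ × ℝ, (fun y => fderiv ℝ f y v) x * fderiv ℝ g x w
      = - ∫ x : ℝ × ℝ, fderiv ℝ (fun y => fderiv ℝ f y v) x w * g x :=
    integral_mul_fderiv_eq_neg_fderiv_mul_of_integrable
      (mulInt _ _ (pdSmooth _ hFv w).continuous hg.continuous (pdCompact _ cFv w))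
      (mulInt _ _ hFv.continuous (pdSmooth g hg w).continuous cFv)
      (mulInt _ _ hFv.continuous hg.continuous cFv)
      (fun x _ => (hFv.differentiable hone) x) (fun x _ => (hg.differentiable hone) x)
  have key2 : ∫ x : ℝ × ℝ, (fun y => fderiv ℝ f y w) x * fderiv ℝ g x v
      = - ∫ x : ℝ × ℝ, fderiv ℝ (fun y => fderiv ℝ f y w) x v * g x :=
    integral_mul_fderiv_eq_neg_fderiv_mul_of_integrable
      (mulInt _ _ (pdSmooth _ hFw v).continuous hg.continuous (pdCompact _ cFw v))
      (mulInt _ _ hFw.continuous (pdSmooth g hg v).continuous cFw)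
      (mulInt _ _ hFw.continuous hg.continuous cFw)
      (fun x _ => (hFw.differentiable hone) x) (fun x _ => (hg.differentiable hone) x)
  have symm : ∀ x : ℝ × ℝ, fderiv ℝ (fun y => fderiv ℝ f y v) x w
      = fderiv ℝ (fun y => fderiv ℝ f y w) x v := fun x => sndSymm f hf v w x
  calc ∫ x : ℝ × ℝ, fderiv ℝ f x v * fderiv ℝ g x w
      = - ∫ x : ℝ × ℝ, fderiv ℝ (fun y => fderiv ℝ f y v) x w * g x := key1
    _ = - ∫ x : ℝ × ℝ, fderiv ℝ (fun y => fderiv ℝ f y w) x v * g x := by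
        congr 1; exact integral_congr_ae (Filter.Eventually.of_forall fun x => by dsimp only; rw [symm x])
    _ = ∫ x : ℝ × ℝ, fderiv ℝ f x w * fderiv ℝ g x v := by rw [← key2]

lemma korn_core (a b c d : ℝ × ℝ → ℝ)
    (iA : Integrable (fun x => a x ^ 2) (volume : Measure (ℝ × ℝ)))
    (iB : Integrable (fun x => b x ^ 2) (volume : Measure (ℝ × ℝ)))
    (iC : Integrable (fun x => c x ^ 2) (volume : Measure (ℝ × ℝ)))
    (iD : Integrable (fun x => d x ^ 2) (volume : Measure (ℝ × ℝ)))
    (iBC : Integrable (fun x => b x * c x) (volume : Measure (ℝ × ℝ)))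
    (iAD : Integrable (fun x => a x * d x) (volume : Measure (ℝ × ℝ)))
    (iBC2 : Integrable (fun x => (b x + c x) ^ 2) (volume : Measure (ℝ × ℝ)))
    (hswap : ∫ x : ℝ × ℝ, b x * c x = ∫ x : ℝ × ℝ, a x * d x) :
    2 * ∫ x : ℝ × ℝ, (a x ^ 2 + d x ^ 2 + (1 / 2) * (b x + c x) ^ 2)
      ≥ ∫ x : ℝ × ℝ, (a x ^ 2 + b x ^ 2 + c x ^ 2 + d x ^ 2) := by
  have EL : ∫ x : ℝ × ℝ, (a x ^ 2 + d x ^ 2 + (1 / 2) * (b x + c x) ^ 2)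
      = (∫ x : ℝ × ℝ, a x ^ 2) + (∫ x : ℝ × ℝ, d x ^ 2)
        + (1 / 2) * ∫ x : ℝ × ℝ, (b x + c x) ^ 2 := by
    rw [integral_add (show Integrable (fun x : ℝ × ℝ => a x ^ 2 + d x ^ 2) volume from iA.add iD)
      (show Integrable (fun x : ℝ × ℝ => (1/2) * (b x + c x) ^ 2) volume from iBC2.const_mul _),
      integral_add iA iD, integral_const_mul]
  have EG : ∫ x : ℝ × ℝ, (a x ^ 2 + b x ^ 2 + c x ^ 2 + d x ^ 2)
      = (∫ x : ℝ × ℝ, a x ^ 2) + (∫ x : ℝ × ℝ, b x ^ 2) + (∫ x : ℝ × ℝ, c x ^ 2)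
        + (∫ x : ℝ × ℝ, d x ^ 2) := by
    rw [integral_add (show Integrable (fun x : ℝ × ℝ => a x ^ 2 + b x ^ 2 + c x ^ 2) volume from
      (iA.add iB).add iC) iD,
      integral_add (show Integrable (fun x : ℝ × ℝ => a x ^ 2 + b x ^ 2) volume from iA.add iB) iC,
      integral_add iA iB]
  have EBC : ∫ x : ℝ × ℝ, (b x + c x) ^ 2
      = (∫ x : ℝ × ℝ, b x ^ 2) + 2 * (∫ x : ℝ × ℝ, b x * c x) + (∫ x : ℝ × ℝ, c x ^ 2) := by
    have h : (fun x : ℝ × ℝ => (b x + c x) ^ 2)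
        = fun x => b x ^ 2 + 2 * (b x * c x) + c x ^ 2 := by funext x; ring
    rw [h, integral_add (show Integrable (fun x : ℝ × ℝ => b x ^ 2 + 2 * (b x * c x)) volume from
      iB.add (iBC.const_mul 2)) iC,
      integral_add iB (show Integrable (fun x : ℝ × ℝ => 2 * (b x * c x)) volume from
      iBC.const_mul 2), integral_const_mul]
  have EAD : (0:ℝ) ≤ ∫ x : ℝ × ℝ, (a x + d x) ^ 2 :=
    integral_nonneg fun x => sq_nonneg _
  have EAD2 : ∫ x : ℝ × ℝ, (a x + d x) ^ 2
      = (∫ x : ℝ × ℝ, a x ^ 2) + 2 * (∫ x : ℝ × ℝ, a x * d x) + (∫ x : ℝ × ℝ, d x ^ 2) := by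
    have h : (fun x : ℝ × ℝ => (a x + d x) ^ 2)
        = fun x => a x ^ 2 + 2 * (a x * d x) + d x ^ 2 := by funext x; ring
    rw [h, integral_add (show Integrable (fun x : ℝ × ℝ => a x ^ 2 + 2 * (a x * d x)) volume from
      iA.add (iAD.const_mul 2)) iD,
      integral_add iA (show Integrable (fun x : ℝ × ℝ => 2 * (a x * d x)) volume from
      iAD.const_mul 2), integral_const_mul]
  rw [ge_iff_le, EL, EG, EBC]
  linarith [EAD, EAD2, hswap]


theorem first_korn_inequality' (v1 v2 : ℝ × ℝ → ℝ)
    (h1 : ContDiff ℝ (⊤ : ℕ∞) v1) (h2 : ContDiff ℝ (⊤ : ℕ∞) v2)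
    (hc1 : HasCompactSupport v1) (hc2 : HasCompactSupport v2) :
    2 * ∫ x : ℝ × ℝ, ((fderiv ℝ v1 x (1,0)) ^ 2 + (fderiv ℝ v2 x (0,1)) ^ 2
        + (1 / 2) * (fderiv ℝ v1 x (0,1) + fderiv ℝ v2 x (1,0)) ^ 2)
      ≥ ∫ x : ℝ × ℝ, ((fderiv ℝ v1 x (1,0)) ^ 2 + (fderiv ℝ v1 x (0,1)) ^ 2
        + (fderiv ℝ v2 x (1,0)) ^ 2 + (fderiv ℝ v2 x (0,1)) ^ 2) := by
  have ca := (pdSmooth v1 h1 (1,0)).continuous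
  have cb := (pdSmooth v1 h1 (0,1)).continuous
  have cc := (pdSmooth v2 h2 (1,0)).continuous
  have cd := (pdSmooth v2 h2 (0,1)).continuous
  have sa := pdCompact v1 hc1 ((1:ℝ),(0:ℝ))
  have sb := pdCompact v1 hc1 ((0:ℝ),(1:ℝ))
  have sc := pdCompact v2 hc2 ((1:ℝ),(0:ℝ))
  have sd := pdCompact v2 hc2 ((0:ℝ),(1:ℝ))
  apply korn_core
  · simpa [sq] using mulInt _ _ ca ca sa
  · simpa [sq] using mulInt _ _ cb cb sb
  · simpa [sq] using mulInt _ _ cc cc sc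
  · simpa [sq] using mulInt _ _ cd cd sd
  · exact mulInt _ _ cb cc sb
  · exact mulInt _ _ ca cd sa
  · simpa [sq] using mulInt _ _ (cb.add cc) (cb.add cc) (sb.add sc)
  · exact swapInt v1 v2 h1 h2 hc1 hc2 (0,1) (1,0)


/-- First Korn inequality: for every smooth compactly supported vector field
`v = (v₁,v₂) ∈ C_c^∞(ℝ², ℝ²)`, `2 ∫_{ℝ²} |ε(v)|² dx ≥ ∫_{ℝ²} |∇v|² dx`. -/
theorem first_korn_inequality (v1 v2 : ℝ × ℝ → ℝ)
    (h1 : ContDiff ℝ (⊤ : ℕ∞) v1) (h2 : ContDiff ℝ (⊤ : ℕ∞) v2)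
    (hc1 : HasCompactSupport v1) (hc2 : HasCompactSupport v2) :
    2 * ∫ x : ℝ × ℝ, epsSq v1 v2 x ≥ ∫ x : ℝ × ℝ, gradSq v1 v2 x := by
  simpa only [epsSq, gradSq, pd1, pd2] using first_korn_inequality' v1 v2 h1 h2 hc1 hc2
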